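/- Let X and Y be finite types, let p : X × Y → ℝ be a probability vector on X × Y, and let T be a column-stochastic matrix on X. Define p' (x, y) = ∑_{x'} T x x' · p (x', y). Then: (i) the Y-marginal is unchanged, ∑_x p' (x, y) = ∑_x p (x, y) for every y; and (ii) the mutual information does not increase, I(p') ≤ I(p), where I(q) = H(x ↦ ∑_y q (x,y)) + H(y ↦ ∑_x q (x,y)) − H(q). That is, a stochastic map acting locally on the system does not change the entropy of the ancilla and can only decrease the system–ancilla correlations. -/

import Mathlib

open Finset

/-- Shannon entropy of a probability vector (with the convention `0 * log 0 = 0`). -/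
noncomputable def shannonEntropy {S : Type*} [Fintype S] (p : S → ℝ) : ℝ :=
  -∑ s, p s * Real.log (p s)

/-- Mutual information of a joint probability vector on `X × Y`. -/
noncomputable def mutualInfo {X Y : Type*} [Fintype X] [Fintype Y] (q : X × Y → ℝ) : ℝ :=
  shannonEntropy (fun x : X => ∑ y, q (x, y)) +
    shannonEntropy (fun y : Y => ∑ x, q (x, y)) - shannonEntropy q

lemma gibbs (a c : ℝ) (ha : 0 ≤ a) (hc : 0 < a → 0 < c) (hc0 : 0 ≤ c) :
    a - c ≤ a * Real.log a - a * Real.log c := by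
  rcases ha.eq_or_lt with h | h
  · simp [← h]; linarith
  · have hcpos := hc h
    have h1 : Real.log (c / a) ≤ c / a - 1 := Real.log_le_sub_one_of_pos (by positivity)
    have h2 : Real.log (c / a) = Real.log c - Real.log a := Real.log_div hcpos.ne' h.ne'
    have h3 : a * Real.log (c / a) ≤ a * (c / a - 1) := by
      exact mul_le_mul_of_nonneg_left h1 h.le
    have : a * (c/a - 1) = c - a := by field_simp
    nlinarith

lemma logsum {ι : Type*} [Fintype ι] (a b : ι → ℝ) (ha : ∀ i, 0 ≤ a i)
    (hb : ∀ i, 0 ≤ b i) (hab : ∀ i, 0 < a i → 0 < b i) :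
    (∑ i, a i) * Real.log (∑ i, a i) - (∑ i, a i) * Real.log (∑ i, b i) ≤
      ∑ i, (a i * Real.log (a i) - a i * Real.log (b i)) := by
  set A := ∑ i, a i with hA
  set B := ∑ i, b i with hB
  have hA0 : 0 ≤ A := Finset.sum_nonneg fun i _ => ha i
  rcases hA0.eq_or_lt with h | hApos
  · have hz : ∀ i ∈ Finset.univ, a i = 0 :=
      (Finset.sum_eq_zero_iff_of_nonneg (fun i _ => ha i)).1 h.symm
    have : ∑ i, (a i * Real.log (a i) - a i * Real.log (b i)) = 0 := by
      apply Finset.sum_eq_zero; intro i hi; rw [hz i hi]; ring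
    rw [this, ← h]; simp
  · have hBpos : 0 < B := by
      obtain ⟨i, -, hi⟩ : ∃ i ∈ Finset.univ, 0 < a i := by
        by_contra hcon
        push_neg at hcon
        have : A = 0 := le_antisymm (hA ▸ Finset.sum_nonpos (fun i hi => hcon i hi)) hA0
        linarith
      exact lt_of_lt_of_le (hab i hi)
        (Finset.single_le_sum (fun j _ => hb j) (Finset.mem_univ i))
    have key : ∀ i ∈ Finset.univ,
        a i * Real.log A - a i * Real.log B + (a i - b i * (A / B)) ≤
          a i * Real.log (a i) - a i * Real.log (b i) := by
      intro i _
      rcases (ha i).eq_or_lt with h0 | h0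
      · rw [← h0]
        have : 0 ≤ b i * (A / B) := mul_nonneg (hb i) (div_nonneg hA0 hBpos.le)
        simp; linarith
      · have hbi := hab i h0
        have hg := gibbs (a i) (b i * (A / B)) (ha i) (fun _ => mul_pos hbi (div_pos hApos hBpos)) (mul_pos hbi (div_pos hApos hBpos)).le
        have : Real.log (b i * (A / B)) = Real.log (b i) + Real.log A - Real.log B := by
          rw [Real.log_mul hbi.ne' (by positivity), Real.log_div hApos.ne' hBpos.ne']
          ring
        rw [this] at hg
        nlinarith
    have hsum := Finset.sum_le_sum key
    have hcollapse : ∑ i, (a i * Real.log A - a i * Real.log B + (a i - b i * (A / B)))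
        = A * Real.log A - A * Real.log B := by
      rw [Finset.sum_add_distrib, Finset.sum_sub_distrib, Finset.sum_sub_distrib,
        ← Finset.sum_mul, ← Finset.sum_mul, ← Finset.sum_mul, ← hA, ← hB]
      field_simp
      ring
    rw [hcollapse] at hsum
    exact hsum

lemma relent_dpi {X Y : Type*} [Fintype X] [Fintype Y] (p b : X × Y → ℝ)
    (hp : ∀ s, 0 ≤ p s) (hb : ∀ s, 0 ≤ b s) (habs : ∀ s, 0 < p s → 0 < b s)
    (T : X → X → ℝ) (hT0 : ∀ x x', 0 ≤ T x x') (hT1 : ∀ x', ∑ x, T x x' = 1) :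
    ∑ s : X × Y, ((∑ x', T s.1 x' * p (x', s.2)) * Real.log (∑ x', T s.1 x' * p (x', s.2)) -
        (∑ x', T s.1 x' * p (x', s.2)) * Real.log (∑ x', T s.1 x' * b (x', s.2))) ≤
      ∑ s : X × Y, (p s * Real.log (p s) - p s * Real.log (b s)) := by
  have step1 : ∀ s : X × Y,
      (∑ x', T s.1 x' * p (x', s.2)) * Real.log (∑ x', T s.1 x' * p (x', s.2)) -
        (∑ x', T s.1 x' * p (x', s.2)) * Real.log (∑ x', T s.1 x' * b (x', s.2)) ≤
      ∑ x', T s.1 x' * (p (x', s.2) * Real.log (p (x', s.2)) -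
        p (x', s.2) * Real.log (b (x', s.2))) := by
    intro s
    have hls := logsum (fun x' => T s.1 x' * p (x', s.2)) (fun x' => T s.1 x' * b (x', s.2))
      (fun x' => mul_nonneg (hT0 _ _) (hp _)) (fun x' => mul_nonneg (hT0 _ _) (hb _))
      (fun x' h => by
        have h' : 0 < T s.1 x' * p (x', s.2) := h
        have hT : 0 < T s.1 x' :=
          lt_of_le_of_ne (hT0 _ _) (fun hc => by simp [← hc] at h')
        have hpp : 0 < p (x', s.2) :=
          lt_of_le_of_ne (hp _) (fun hc => by simp [← hc] at h')
        exact mul_pos hT (habs _ hpp))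
    refine hls.trans (le_of_eq (Finset.sum_congr rfl fun x' _ => ?_))
    beta_reduce
    rcases eq_or_lt_of_le (hT0 s.1 x') with hT | hT
    · rw [← hT]; simp
    rcases eq_or_lt_of_le (hp (x', s.2)) with hpz | hpz
    · rw [← hpz]; simp
    have hbz := habs _ hpz
    rw [Real.log_mul hT.ne' hpz.ne', Real.log_mul hT.ne' hbz.ne']
    ring
  refine (Finset.sum_le_sum fun s _ => step1 s).trans (le_of_eq ?_)
  rw [Finset.sum_comm]
  conv_rhs => rw [Fintype.sum_prod_type]
  refine Finset.sum_congr rfl fun x' _ => ?_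
  rw [Fintype.sum_prod_type, Finset.sum_comm]
  refine Finset.sum_congr rfl fun y _ => ?_
  simp only
  rw [← Finset.sum_mul, hT1]
  ring

lemma marg1_pos {X Y : Type*} [Fintype X] [Fintype Y] (q : X × Y → ℝ) (hq : ∀ s, 0 ≤ q s)
    (s : X × Y) (hs : 0 < q s) : 0 < ∑ y, q (s.1, y) :=
  lt_of_lt_of_le hs (by
    have := Finset.single_le_sum (f := fun y => q (s.1, y)) (fun y _ => hq _)
      (Finset.mem_univ s.2)
    simpa using this)

lemma marg2_pos {X Y : Type*} [Fintype X] [Fintype Y] (q : X × Y → ℝ) (hq : ∀ s, 0 ≤ q s)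
    (s : X × Y) (hs : 0 < q s) : 0 < ∑ x, q (x, s.2) :=
  lt_of_lt_of_le hs (by
    have := Finset.single_le_sum (f := fun x => q (x, s.2)) (fun x _ => hq _)
      (Finset.mem_univ s.1)
    simpa using this)

lemma mutualInfo_eq_relent {X Y : Type*} [Fintype X] [Fintype Y] (q : X × Y → ℝ)
    (hq : ∀ s, 0 ≤ q s) :
    mutualInfo q = ∑ s : X × Y, (q s * Real.log (q s) -
      q s * Real.log ((∑ y, q (s.1, y)) * (∑ x, q (x, s.2)))) := by
  have key : ∑ s : X × Y, q s * Real.log ((∑ y, q (s.1, y)) * (∑ x, q (x, s.2)))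
      = ∑ x, (∑ y, q (x, y)) * Real.log (∑ y, q (x, y)) +
        ∑ y, (∑ x, q (x, y)) * Real.log (∑ x, q (x, y)) := by
    have e1 : ∀ s : X × Y, q s * Real.log ((∑ y, q (s.1, y)) * (∑ x, q (x, s.2)))
        = q s * Real.log (∑ y, q (s.1, y)) + q s * Real.log (∑ x, q (x, s.2)) := by
      intro s
      rcases (hq s).eq_or_lt with h | h
      · rw [← h]; ring
      · rw [Real.log_mul (marg1_pos q hq s h).ne' (marg2_pos q hq s h).ne']; ring
    rw [Finset.sum_congr rfl fun s _ => e1 s, Finset.sum_add_distrib]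
    congr 1
    · rw [Fintype.sum_prod_type]
      exact Finset.sum_congr rfl fun x _ => by simp only; rw [← Finset.sum_mul]
    · rw [Fintype.sum_prod_type, Finset.sum_comm]
      exact Finset.sum_congr rfl fun y _ => by simp only; rw [← Finset.sum_mul]
  rw [Finset.sum_sub_distrib, key]
  simp only [mutualInfo, shannonEntropy]
  ring

/-- A stochastic map acting locally on the system does not change the marginal of the
ancilla and can only decrease the system–ancilla mutual information. -/
theorem local_stochastic_map_data_processing {X Y : Type*} [Fintype X] [Fintype Y]
    (p : X × Y → ℝ) (hp0 : ∀ s, 0 ≤ p s) (hp1 : ∑ s, p s = 1)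
    (T : X → X → ℝ) (hT0 : ∀ x x', 0 ≤ T x x') (hT1 : ∀ x', ∑ x, T x x' = 1) :
    (∀ y : Y, ∑ x, (∑ x', T x x' * p (x', y)) = ∑ x, p (x, y)) ∧
    mutualInfo (fun s : X × Y => ∑ x', T s.1 x' * p (x', s.2)) ≤ mutualInfo p := by
  have part1 : ∀ y : Y, ∑ x, (∑ x', T x x' * p (x', y)) = ∑ x, p (x, y) := by
    intro y
    rw [Finset.sum_comm]
    exact Finset.sum_congr rfl fun x' _ => by rw [← Finset.sum_mul, hT1, one_mul]
  refine ⟨part1, ?_⟩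
  set p' : X × Y → ℝ := fun s => ∑ x', T s.1 x' * p (x', s.2) with hp'
  have hp'0 : ∀ s, 0 ≤ p' s := fun s =>
    Finset.sum_nonneg fun x' _ => mul_nonneg (hT0 _ _) (hp0 _)
  set b : X × Y → ℝ := fun s => (∑ y, p (s.1, y)) * (∑ x, p (x, s.2)) with hbdef
  have hb0 : ∀ s, 0 ≤ b s := fun s =>
    mul_nonneg (Finset.sum_nonneg fun _ _ => hp0 _) (Finset.sum_nonneg fun _ _ => hp0 _)
  have habs : ∀ s, 0 < p s → 0 < b s := fun s hs =>
    mul_pos (marg1_pos p hp0 s hs) (marg2_pos p hp0 s hs)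
  have hdpi := relent_dpi p b hp0 hb0 habs T hT0 hT1
  have hb' : ∀ s : X × Y, (∑ y, p' (s.1, y)) * (∑ x, p' (x, s.2))
      = ∑ x', T s.1 x' * b (x', s.2) := by
    intro s
    have h1 : ∑ y, p' (s.1, y) = ∑ x', T s.1 x' * (∑ y, p (x', y)) := by
      simp only [hp']
      rw [Finset.sum_comm]
      exact Finset.sum_congr rfl fun x' _ => by rw [Finset.mul_sum]
    have h2 : ∑ x, p' (x, s.2) = ∑ x, p (x, s.2) := part1 s.2
    rw [h1, h2, Finset.sum_mul, hbdef]
    exact Finset.sum_congr rfl fun x' _ => by ring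
  rw [mutualInfo_eq_relent p hp0, mutualInfo_eq_relent p' hp'0]
  refine le_trans (le_of_eq ?_) hdpi
  refine Finset.sum_congr rfl fun s _ => ?_
  rw [hb' s]
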